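/- Let K be a field and λ ∈ K∖{0,1}. With (Q^(2), W^(2)_λ) the quiver with potential W^(2)_λ = λabc − dgc + dki − afi + jgh − ebh + efl − jkl of tubular type (2,2,2,2;λ), there is a K-algebra isomorphism KQ^(2)/J′(W^(2)_λ) ≅ KQ^(2)/J′(W^(2)_{λ⁻¹}). -/

import Mathlib

/-- A finite quiver: `nV` vertices, `nA` arrows, with source and target maps. -/
structure FQuiver where
  nV : ℕ
  nA : ℕ
  src : Fin nA → Fin nV
  tgt : Fin nA → Fin nV

namespace FQuiver

variable (Q : FQuiver)

/-- Walk along a list of arrows starting at `v`; returns `some w` if the list is a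
composable path ending at `w`, and `none` otherwise. -/
def walk : Fin Q.nV → List (Fin Q.nA) → Option (Fin Q.nV)
  | v, [] => some v
  | v, e :: l => if Q.src e = v then walk (Q.tgt e) l else none

theorem walk_append (v : Fin Q.nV) (l₁ l₂ : List (Fin Q.nA)) :
    Q.walk v (l₁ ++ l₂) = (Q.walk v l₁).bind fun w => Q.walk w l₂ := by
  induction l₁ generalizing v with
  | nil => simp [walk]
  | cons e l ih =>
    simp only [List.cons_append, walk]
    split
    · exact ih _
    · rfl

/-- A path in `Q`: a pair of endpoints together with a composable list of arrows. -/
abbrev FPath (Q : FQuiver) : Type :=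
  { x : (Fin Q.nV × Fin Q.nV) × List (Fin Q.nA) // Q.walk x.1.1 x.2 = some x.1.2 }

/-- The trivial path `e_v` at a vertex `v`. -/
def idPath (v : Fin Q.nV) : Q.FPath := ⟨((v, v), []), rfl⟩

/-- The path consisting of a single arrow `e`. -/
def arrowPath (e : Fin Q.nA) : Q.FPath :=
  ⟨((Q.src e, Q.tgt e), [e]), by simp [walk]⟩

/-- The basis monoid of the path algebra: paths, together with a formal unit `one`
and a formal absorbing element `zero` (products of non-composable paths). -/
inductive PM (Q : FQuiver) : Type
  | zero : PM Q
  | one : PM Q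
  | p : Q.FPath → PM Q

/-- Multiplication of (formal) paths: concatenation when composable, `zero` otherwise. -/
def pmMul : PM Q → PM Q → PM Q
  | .zero, _ => .zero
  | .one, y => y
  | .p _, .zero => .zero
  | .p x, .one => .p x
  | .p x, .p y =>
    if h : x.1.1.2 = y.1.1.1 then
      .p ⟨((x.1.1.1, y.1.1.2), x.1.2 ++ y.1.2), by
        rw [Q.walk_append, x.2, Option.bind_some, h]; exact y.2⟩
    else .zero

theorem pmMul_one (m : PM Q) : Q.pmMul m .one = m := by cases m <;> rfl

theorem pmMul_zero (m : PM Q) : Q.pmMul m .zero = .zero := by cases m <;> rfl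

instance : Monoid (PM Q) where
  mul := Q.pmMul
  one := .one
  one_mul _ := rfl
  mul_one := Q.pmMul_one
  mul_assoc x y z := by
    show Q.pmMul (Q.pmMul x y) z = Q.pmMul x (Q.pmMul y z)
    cases x with
    | zero => rfl
    | one => rfl
    | p px =>
      cases y with
      | zero => rfl
      | one => rfl
      | p py =>
        cases z with
        | zero => simp only [pmMul_zero]
        | one => simp only [pmMul_one]
        | p pz =>
          obtain ⟨⟨⟨a, b⟩, lx⟩, hx⟩ := px
          obtain ⟨⟨⟨c, d⟩, ly⟩, hy⟩ := py
          obtain ⟨⟨⟨e, f⟩, lz⟩, hz⟩ := pz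
          by_cases h1 : b = c <;> by_cases h2 : d = e <;>
            simp [pmMul, h1, h2, List.append_assoc]

end FQuiver

namespace FQuiver

variable (Q : FQuiver) (K : Type) [Field K]

/-- The basis element of the path algebra given by a list of arrows starting at `v`:
the corresponding path if the list is composable, and `0` otherwise. -/
noncomputable def mkPath (v : Fin Q.nV) (l : List (Fin Q.nA)) :
    MonoidAlgebra K (PM Q) :=
  match h : Q.walk v l with
  | none => 0
  | some w => MonoidAlgebra.single (.p ⟨((v, w), l), h⟩) 1

/-- Cyclic derivative of a basis word with respect to an arrow `a`:
`∂ₐ(a₁⋯a_d) = Σ_{p : a_p = a} a_{p+1}⋯a_d a₁⋯a_{p−1}`. -/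
noncomputable def cycDerWord (a : Fin Q.nA) : PM Q → MonoidAlgebra K (PM Q)
  | .p x =>
    ∑ i ∈ Finset.range x.1.2.length,
      if x.1.2[i]? = some a then
        Q.mkPath K (Q.tgt a) (x.1.2.drop (i + 1) ++ x.1.2.take i)
      else 0
  | _ => 0

/-- The cyclic derivative `∂ₐ`, extended `K`-linearly. -/
noncomputable def cycDer (a : Fin Q.nA) (W : MonoidAlgebra K (PM Q)) :
    MonoidAlgebra K (PM Q) :=
  W.coeff.sum fun m c => c • Q.cycDerWord K a m

/-- A word is an oriented cycle if it is a nonempty path with equal endpoints. -/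
def IsCycleWord : PM Q → Prop
  | .p x => x.1.1.1 = x.1.1.2 ∧ x.1.2 ≠ []
  | _ => False

/-- A (finite) potential: a `K`-linear combination of oriented cycles. -/
def IsPotential (W : MonoidAlgebra K (PM Q)) : Prop :=
  ∀ m ∈ W.coeff.support, Q.IsCycleWord m

/-- The defining relations of the path algebra `KQ` as a quotient of the monoid algebra
of the path monoid: the formal absorbing element is `0`, and the identity is the sum of
the trivial paths `e_v`. -/
inductive pathRel : MonoidAlgebra K (PM Q) → MonoidAlgebra K (PM Q) → Prop
  | zero : pathRel (MonoidAlgebra.single .zero 1) 0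
  | one : pathRel (MonoidAlgebra.single .one 1)
      (∑ v : Fin Q.nV, MonoidAlgebra.single (.p (Q.idPath v)) 1)

/-- The path algebra `KQ` of a finite quiver `Q`. -/
abbrev PathAlg : Type := RingQuot (Q.pathRel K)

/-- The canonical projection from the monoid algebra onto the path algebra. -/
noncomputable def pathMk : MonoidAlgebra K (PM Q) →ₐ[K] Q.PathAlg K :=
  RingQuot.mkAlgHom K (Q.pathRel K)

/-- The Jacobian ideal `J′(W)`: the two-sided ideal of the path algebra `KQ` generated
by the cyclic derivatives `∂ₐW` for all arrows `a`. -/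
noncomputable def jacIdeal (W : MonoidAlgebra K (PM Q)) : TwoSidedIdeal (Q.PathAlg K) :=
  TwoSidedIdeal.span (Set.range fun a : Fin Q.nA => Q.pathMk K (Q.cycDer K a W))

/-- The defining relations of the Jacobian algebra `KQ/J′(W)`: the path algebra
relations together with the vanishing of all cyclic derivatives `∂ₐW`. -/
inductive jacRel (W : MonoidAlgebra K (PM Q)) :
    MonoidAlgebra K (PM Q) → MonoidAlgebra K (PM Q) → Prop
  | zero : jacRel W (MonoidAlgebra.single .zero 1) 0
  | one : jacRel W (MonoidAlgebra.single .one 1)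
      (∑ v : Fin Q.nV, MonoidAlgebra.single (.p (Q.idPath v)) 1)
  | der (a : Fin Q.nA) : jacRel W (Q.cycDer K a W) 0

/-- The Jacobian algebra `KQ/J′(W)`. -/
abbrev JacAlg (W : MonoidAlgebra K (PM Q)) : Type := RingQuot (Q.jacRel K W)

/-- The canonical projection onto the Jacobian algebra. -/
noncomputable def jacMk (W : MonoidAlgebra K (PM Q)) :
    MonoidAlgebra K (PM Q) →ₐ[K] Q.JacAlg K W :=
  RingQuot.mkAlgHom K (Q.jacRel K W)

end FQuiver

open FQuiver

/-- The quiver `Q⁽²⁾` of tubular type `(2,2,2,2;λ)`: 6 vertices (top row `1,2,3` are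
indices `0,1,2`, bottom row `4,5,6` are indices `3,4,5`) and 12 arrows
`a : 2→1, b : 3→2, c : 1→3, d : 5→1, e : 2→4, f : 6→2, g : 3→5, h : 4→3, i : 1→6,
j : 5→4, k : 6→5, l : 4→6` (arrows `a,…,l` are indices `0,…,11`). -/
abbrev Q2 : FQuiver where
  nV := 6
  nA := 12
  src := ![1, 2, 0, 4, 1, 5, 2, 3, 0, 4, 5, 3]
  tgt := ![0, 1, 2, 0, 3, 1, 4, 2, 5, 3, 4, 5]

/-- The potential `W⁽²⁾_λ = λabc − dgc + dki − afi + jgh − ebh + efl − jkl`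
(each monomial an oriented 3-cycle, written as a composable list of arrows). -/
noncomputable def W2 (K : Type) [Field K] (lam : K) : MonoidAlgebra K (PM Q2) :=
  lam • Q2.mkPath K 0 [2, 1, 0] - Q2.mkPath K 0 [2, 6, 3] + Q2.mkPath K 0 [8, 10, 3]
    - Q2.mkPath K 0 [8, 5, 0] + Q2.mkPath K 2 [6, 9, 7] - Q2.mkPath K 3 [7, 1, 4]
    + Q2.mkPath K 3 [11, 5, 4] - Q2.mkPath K 3 [11, 10, 9]

/-- The idempotent `e_v` of the Jacobian algebra `KQ⁽²⁾/J′(W⁽²⁾_λ)`. -/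
noncomputable def eps2 (K : Type) [Field K] (lam : K) (v : Fin 6) :
    Q2.JacAlg K (W2 K lam) :=
  Q2.jacMk K (W2 K lam) (MonoidAlgebra.single (PM.p (Q2.idPath v)) 1)

/-- The `(v,w)`-component `e_v·A·e_w` of the Jacobian algebra `A = KQ⁽²⁾/J′(W⁽²⁾_λ)`;
its dimension is the `w`-entry of the dimension vector of the indecomposable projective
module at the vertex `v`. -/
noncomputable def projComp2 (K : Type) [Field K] (lam : K) (v w : Fin 6) :
    Submodule K (Q2.JacAlg K (W2 K lam)) :=
  LinearMap.range
    ((LinearMap.mulLeft K (eps2 K lam v)).comp (LinearMap.mulRight K (eps2 K lam w)))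

namespace JacAux

open MonoidAlgebra

variable {K : Type} [Field K]

/-- The arrow involution a↔j, b↔k, c↔l, d↔e, f↔g, h↔i. -/
def sg : Fin 12 → Fin 12 := ![9,10,11,4,3,6,5,8,7,0,1,2]
/-- The vertex involution 1↔4, 2↔5, 3↔6. -/
def tu : Fin 6 → Fin 6 := ![3,4,5,0,1,2]

lemma src_sg : ∀ e, Q2.src (sg e) = tu (Q2.src e) := by decide
lemma tgt_sg : ∀ e, Q2.tgt (sg e) = tu (Q2.tgt e) := by decide
lemma sg_sg : ∀ e, sg (sg e) = e := by decide
lemma tu_tu : ∀ v, tu (tu v) = v := by decide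
lemma tu_inj : Function.Injective tu := by decide

lemma walk_map (l : List (Fin 12)) : ∀ v, Q2.walk (tu v) (l.map sg) = (Q2.walk v l).map tu := by
  induction l with
  | nil => intro v; rfl
  | cons e l ih =>
    intro v
    show Q2.walk (tu v) (sg e :: l.map sg) = _
    rw [FQuiver.walk, FQuiver.walk, src_sg]
    by_cases h : Q2.src e = v
    · rw [if_pos h, if_pos (by rw [h]), tgt_sg, ih]
    · rw [if_neg h, if_neg (fun hh => h (tu_inj hh))]
      rfl

/-- The image path under the quiver automorphism. -/
def mapPath (x : Q2.FPath) : Q2.FPath :=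
  ⟨((tu x.1.1.1, tu x.1.1.2), x.1.2.map sg), by rw [walk_map, x.2]; rfl⟩

lemma mapPath_mapPath (x : Q2.FPath) : mapPath (mapPath x) = x := by
  obtain ⟨⟨⟨v, w⟩, l⟩, h⟩ := x
  apply Subtype.ext
  simp only [mapPath, List.map_map, tu_tu]
  congr 1
  rw [show sg ∘ sg = id from funext sg_sg, List.map_id]

end JacAux

namespace JacAux

variable {K : Type} [Field K]

lemma jacMk_zero' (W : MonoidAlgebra K (PM Q2)) :
    Q2.jacMk K W (MonoidAlgebra.single .zero 1) = 0 := by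
  have := RingQuot.mkAlgHom_rel K (FQuiver.jacRel.zero (Q := Q2) (K := K) (W := W))
  simpa [FQuiver.jacMk] using this

/-- Scalar attached to a basis monomial by arrow-rescaling `c`. -/
def scal (c : Fin 12 → K) : PM Q2 → K
  | .p x => (x.1.2.map c).prod
  | _ => 1

/-- The underlying function of the rescaling-and-permuting map. -/
noncomputable def FmonFun (c : Fin 12 → K) (W : MonoidAlgebra K (PM Q2)) :
    PM Q2 → Q2.JacAlg K W
  | .zero => 0
  | .one => 1
  | .p x => (x.1.2.map c).prod • Q2.jacMk K W (MonoidAlgebra.single (.p (mapPath x)) 1)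

lemma FmonFun_mul (c : Fin 12 → K) (W : MonoidAlgebra K (PM Q2)) (x y : PM Q2) :
    FmonFun c W (Q2.pmMul x y) = FmonFun c W x * FmonFun c W y := by
  cases x with
  | zero => show (0 : Q2.JacAlg K W) = 0 * _; rw [zero_mul]
  | one =>
    show FmonFun c W y = FmonFun c W PM.one * FmonFun c W y
    rw [show FmonFun c W PM.one = 1 from rfl, one_mul]
  | p px =>
    cases y with
    | zero =>
      show FmonFun c W (Q2.pmMul (.p px) .zero) = _ * 0
      rw [Q2.pmMul_zero, mul_zero]; rfl
    | one =>
      show FmonFun c W (Q2.pmMul (.p px) .one) = _ * 1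
      rw [Q2.pmMul_one, mul_one]
    | p py =>
      rw [show FmonFun c W (.p px) * FmonFun c W (.p py) = (_ • _) * (_ • _) from rfl,
        smul_mul_smul_comm, ← map_mul, MonoidAlgebra.single_mul_single, one_mul]
      by_cases h : px.1.1.2 = py.1.1.1
      · have h2 : (mapPath px).1.1.2 = (mapPath py).1.1.1 := by
          show tu px.1.1.2 = tu py.1.1.1; rw [h]
        rw [show Q2.pmMul (.p px) (.p py) = .p ⟨((px.1.1.1, py.1.1.2), px.1.2 ++ py.1.2),
              by rw [Q2.walk_append, px.2, Option.bind_some, h]; exact py.2⟩ from dif_pos h,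
          show (PM.p (mapPath px) * PM.p (mapPath py) : PM Q2)
              = .p ⟨(((mapPath px).1.1.1, (mapPath py).1.1.2),
                  (mapPath px).1.2 ++ (mapPath py).1.2),
              by rw [Q2.walk_append, (mapPath px).2, Option.bind_some, h2];
                 exact (mapPath py).2⟩ from dif_pos h2]
        show (_ : K) • _ = _
        rw [← List.prod_append, ← List.map_append]
        congr 2
        apply congrArg (fun m => MonoidAlgebra.single m (1:K))
        apply congrArg PM.p
        apply Subtype.ext
        show ((tu px.1.1.1, tu py.1.1.2), (px.1.2 ++ py.1.2).map sg)
            = ((tu px.1.1.1, tu py.1.1.2), px.1.2.map sg ++ py.1.2.map sg)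
        rw [List.map_append]
      · have h2 : ¬ (mapPath px).1.1.2 = (mapPath py).1.1.1 :=
          fun hh => h (tu_inj hh)
        rw [show Q2.pmMul (.p px) (.p py) = .zero from dif_neg h,
          show (PM.p (mapPath px) * PM.p (mapPath py) : PM Q2) = .zero from dif_neg h2]
        show (0 : Q2.JacAlg K W) = _ • Q2.jacMk K W (MonoidAlgebra.single .zero 1)
        rw [jacMk_zero', smul_zero]

/-- The rescaling-and-permuting monoid hom into a Jacobian algebra. -/
noncomputable def Fmon (c : Fin 12 → K) (W : MonoidAlgebra K (PM Q2)) :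
    PM Q2 →* Q2.JacAlg K W where
  toFun := FmonFun c W
  map_one' := rfl
  map_mul' := FmonFun_mul c W

/-- The induced algebra hom from the monoid algebra. -/
noncomputable def Falg (c : Fin 12 → K) (W : MonoidAlgebra K (PM Q2)) :
    MonoidAlgebra K (PM Q2) →ₐ[K] Q2.JacAlg K W :=
  MonoidAlgebra.lift K _ (PM Q2) (Fmon c W)

lemma Falg_single (c : Fin 12 → K) (W : MonoidAlgebra K (PM Q2)) (m : PM Q2) (k : K) :
    Falg c W (MonoidAlgebra.single m k) = k • FmonFun c W m :=
  MonoidAlgebra.lift_single _ _ _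

end JacAux

namespace JacAux

variable {K : Type} [Field K]

lemma mkPath_some {v w : Fin 6} {l : List (Fin 12)} (h : Q2.walk v l = some w) :
    Q2.mkPath K v l = MonoidAlgebra.single (.p ⟨((v, w), l), h⟩) 1 := by
  unfold FQuiver.mkPath
  split
  · next h' => rw [h] at h'; cases h'
  · next w' h' =>
    rw [h] at h'
    cases h'
    rfl

lemma cycDer_eq (a : Fin 12) (W : MonoidAlgebra K (PM Q2)) :
    Q2.cycDer K a W = Finsupp.linearCombination K (Q2.cycDerWord K a) W.coeff := by
  rw [FQuiver.cycDer, Finsupp.linearCombination_apply]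

lemma cycDerWord_p (a : Fin 12) (x : Q2.FPath) :
    Q2.cycDerWord K a (.p x) = ∑ i ∈ Finset.range x.1.2.length,
      if x.1.2[i]? = some a then
        Q2.mkPath K (Q2.tgt a) (x.1.2.drop (i + 1) ++ x.1.2.take i)
      else 0 := rfl

end JacAux

namespace JacAux

variable {K : Type} [Field K]

def cyc1 : Q2.FPath := ⟨((0,0),[2,1,0]), by decide⟩
def cyc2 : Q2.FPath := ⟨((0,0),[2,6,3]), by decide⟩
def cyc3 : Q2.FPath := ⟨((0,0),[8,10,3]), by decide⟩
def cyc4 : Q2.FPath := ⟨((0,0),[8,5,0]), by decide⟩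
def cyc5 : Q2.FPath := ⟨((2,2),[6,9,7]), by decide⟩
def cyc6 : Q2.FPath := ⟨((3,3),[7,1,4]), by decide⟩
def cyc7 : Q2.FPath := ⟨((3,3),[11,5,4]), by decide⟩
def cyc8 : Q2.FPath := ⟨((3,3),[11,10,9]), by decide⟩

lemma W2_eq (lam : K) : W2 K lam =
    lam • MonoidAlgebra.single (.p cyc1) 1 - MonoidAlgebra.single (.p cyc2) 1
    + MonoidAlgebra.single (.p cyc3) 1 - MonoidAlgebra.single (.p cyc4) 1
    + MonoidAlgebra.single (.p cyc5) 1 - MonoidAlgebra.single (.p cyc6) 1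
    + MonoidAlgebra.single (.p cyc7) 1 - MonoidAlgebra.single (.p cyc8) 1 := by
  rw [W2, mkPath_some (v := 0) (w := 0) (l := [2,1,0]) (by decide),
    mkPath_some (v := 0) (w := 0) (l := [2,6,3]) (by decide),
    mkPath_some (v := 0) (w := 0) (l := [8,10,3]) (by decide),
    mkPath_some (v := 0) (w := 0) (l := [8,5,0]) (by decide),
    mkPath_some (v := 2) (w := 2) (l := [6,9,7]) (by decide),
    mkPath_some (v := 3) (w := 3) (l := [7,1,4]) (by decide),
    mkPath_some (v := 3) (w := 3) (l := [11,5,4]) (by decide),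
    mkPath_some (v := 3) (w := 3) (l := [11,10,9]) (by decide)]
  rfl

end JacAux

namespace JacAux

variable {K : Type} [Field K]

lemma D0 (lam : K) : Q2.cycDer K 0 (W2 K lam) = lam • Q2.mkPath K 0 [2,1] - Q2.mkPath K 0 [8,5] := by
  rw [cycDer_eq, W2_eq]
  simp only [MonoidAlgebra.coeff_add, MonoidAlgebra.coeff_sub, MonoidAlgebra.coeff_smul,
    MonoidAlgebra.coeff_single,
    map_add, map_sub, map_smul, Finsupp.linearCombination_single, one_smul,
    cycDerWord_p, cyc1, cyc2, cyc3, cyc4, cyc5, cyc6, cyc7, cyc8]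
  simp +decide [Finset.sum_range_succ, show Q2.tgt 0 = 0 from rfl, show (![0,1,2,0,3,1,4,2,5,3,4,5] : Fin 12 → Fin 6) 0 = 0 from rfl]
  try abel

lemma D1 (lam : K) : Q2.cycDer K 1 (W2 K lam) = lam • Q2.mkPath K 1 [0,2] - Q2.mkPath K 1 [4,7] := by
  rw [cycDer_eq, W2_eq]
  simp only [MonoidAlgebra.coeff_add, MonoidAlgebra.coeff_sub, MonoidAlgebra.coeff_smul,
    MonoidAlgebra.coeff_single,
    map_add, map_sub, map_smul, Finsupp.linearCombination_single, one_smul,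
    cycDerWord_p, cyc1, cyc2, cyc3, cyc4, cyc5, cyc6, cyc7, cyc8]
  simp +decide [Finset.sum_range_succ, show Q2.tgt 1 = 1 from rfl, show (![0,1,2,0,3,1,4,2,5,3,4,5] : Fin 12 → Fin 6) 1 = 1 from rfl]
  try abel

lemma D2 (lam : K) : Q2.cycDer K 2 (W2 K lam) = lam • Q2.mkPath K 2 [1,0] - Q2.mkPath K 2 [6,3] := by
  rw [cycDer_eq, W2_eq]
  simp only [MonoidAlgebra.coeff_add, MonoidAlgebra.coeff_sub, MonoidAlgebra.coeff_smul,
    MonoidAlgebra.coeff_single,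
    map_add, map_sub, map_smul, Finsupp.linearCombination_single, one_smul,
    cycDerWord_p, cyc1, cyc2, cyc3, cyc4, cyc5, cyc6, cyc7, cyc8]
  simp +decide [Finset.sum_range_succ, show Q2.tgt 2 = 2 from rfl, show (![0,1,2,0,3,1,4,2,5,3,4,5] : Fin 12 → Fin 6) 2 = 2 from rfl]
  try abel

lemma D3 (lam : K) : Q2.cycDer K 3 (W2 K lam) = Q2.mkPath K 0 [8,10] - Q2.mkPath K 0 [2,6] := by
  rw [cycDer_eq, W2_eq]
  simp only [MonoidAlgebra.coeff_add, MonoidAlgebra.coeff_sub, MonoidAlgebra.coeff_smul,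
    MonoidAlgebra.coeff_single,
    map_add, map_sub, map_smul, Finsupp.linearCombination_single, one_smul,
    cycDerWord_p, cyc1, cyc2, cyc3, cyc4, cyc5, cyc6, cyc7, cyc8]
  simp +decide [Finset.sum_range_succ, show Q2.tgt 3 = 0 from rfl, show (![0,1,2,0,3,1,4,2,5,3,4,5] : Fin 12 → Fin 6) 3 = 0 from rfl]
  try abel

lemma D4 (lam : K) : Q2.cycDer K 4 (W2 K lam) = Q2.mkPath K 3 [11,5] - Q2.mkPath K 3 [7,1] := by
  rw [cycDer_eq, W2_eq]
  simp only [MonoidAlgebra.coeff_add, MonoidAlgebra.coeff_sub, MonoidAlgebra.coeff_smul,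
    MonoidAlgebra.coeff_single,
    map_add, map_sub, map_smul, Finsupp.linearCombination_single, one_smul,
    cycDerWord_p, cyc1, cyc2, cyc3, cyc4, cyc5, cyc6, cyc7, cyc8]
  simp +decide [Finset.sum_range_succ, show Q2.tgt 4 = 3 from rfl, show (![0,1,2,0,3,1,4,2,5,3,4,5] : Fin 12 → Fin 6) 4 = 3 from rfl]
  try abel

lemma D5 (lam : K) : Q2.cycDer K 5 (W2 K lam) = Q2.mkPath K 1 [4,11] - Q2.mkPath K 1 [0,8] := by
  rw [cycDer_eq, W2_eq]
  simp only [MonoidAlgebra.coeff_add, MonoidAlgebra.coeff_sub, MonoidAlgebra.coeff_smul,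
    MonoidAlgebra.coeff_single,
    map_add, map_sub, map_smul, Finsupp.linearCombination_single, one_smul,
    cycDerWord_p, cyc1, cyc2, cyc3, cyc4, cyc5, cyc6, cyc7, cyc8]
  simp +decide [Finset.sum_range_succ, show Q2.tgt 5 = 1 from rfl, show (![0,1,2,0,3,1,4,2,5,3,4,5] : Fin 12 → Fin 6) 5 = 1 from rfl]
  try abel

lemma D6 (lam : K) : Q2.cycDer K 6 (W2 K lam) = Q2.mkPath K 4 [9,7] - Q2.mkPath K 4 [3,2] := by
  rw [cycDer_eq, W2_eq]
  simp only [MonoidAlgebra.coeff_add, MonoidAlgebra.coeff_sub, MonoidAlgebra.coeff_smul,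
    MonoidAlgebra.coeff_single,
    map_add, map_sub, map_smul, Finsupp.linearCombination_single, one_smul,
    cycDerWord_p, cyc1, cyc2, cyc3, cyc4, cyc5, cyc6, cyc7, cyc8]
  simp +decide [Finset.sum_range_succ, show Q2.tgt 6 = 4 from rfl, show (![0,1,2,0,3,1,4,2,5,3,4,5] : Fin 12 → Fin 6) 6 = 4 from rfl]
  try abel

lemma D7 (lam : K) : Q2.cycDer K 7 (W2 K lam) = Q2.mkPath K 2 [6,9] - Q2.mkPath K 2 [1,4] := by
  rw [cycDer_eq, W2_eq]
  simp only [MonoidAlgebra.coeff_add, MonoidAlgebra.coeff_sub, MonoidAlgebra.coeff_smul,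
    MonoidAlgebra.coeff_single,
    map_add, map_sub, map_smul, Finsupp.linearCombination_single, one_smul,
    cycDerWord_p, cyc1, cyc2, cyc3, cyc4, cyc5, cyc6, cyc7, cyc8]
  simp +decide [Finset.sum_range_succ, show Q2.tgt 7 = 2 from rfl, show (![0,1,2,0,3,1,4,2,5,3,4,5] : Fin 12 → Fin 6) 7 = 2 from rfl]
  try abel

lemma D8 (lam : K) : Q2.cycDer K 8 (W2 K lam) = Q2.mkPath K 5 [10,3] - Q2.mkPath K 5 [5,0] := by
  rw [cycDer_eq, W2_eq]
  simp only [MonoidAlgebra.coeff_add, MonoidAlgebra.coeff_sub, MonoidAlgebra.coeff_smul,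
    MonoidAlgebra.coeff_single,
    map_add, map_sub, map_smul, Finsupp.linearCombination_single, one_smul,
    cycDerWord_p, cyc1, cyc2, cyc3, cyc4, cyc5, cyc6, cyc7, cyc8]
  simp +decide [Finset.sum_range_succ, show Q2.tgt 8 = 5 from rfl, show (![0,1,2,0,3,1,4,2,5,3,4,5] : Fin 12 → Fin 6) 8 = 5 from rfl]
  try abel

lemma D9 (lam : K) : Q2.cycDer K 9 (W2 K lam) = Q2.mkPath K 3 [7,6] - Q2.mkPath K 3 [11,10] := by
  rw [cycDer_eq, W2_eq]
  simp only [MonoidAlgebra.coeff_add, MonoidAlgebra.coeff_sub, MonoidAlgebra.coeff_smul,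
    MonoidAlgebra.coeff_single,
    map_add, map_sub, map_smul, Finsupp.linearCombination_single, one_smul,
    cycDerWord_p, cyc1, cyc2, cyc3, cyc4, cyc5, cyc6, cyc7, cyc8]
  simp +decide [Finset.sum_range_succ, show Q2.tgt 9 = 3 from rfl, show (![0,1,2,0,3,1,4,2,5,3,4,5] : Fin 12 → Fin 6) 9 = 3 from rfl]
  try abel

lemma D10 (lam : K) : Q2.cycDer K 10 (W2 K lam) = Q2.mkPath K 4 [3,8] - Q2.mkPath K 4 [9,11] := by
  rw [cycDer_eq, W2_eq]
  simp only [MonoidAlgebra.coeff_add, MonoidAlgebra.coeff_sub, MonoidAlgebra.coeff_smul,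
    MonoidAlgebra.coeff_single,
    map_add, map_sub, map_smul, Finsupp.linearCombination_single, one_smul,
    cycDerWord_p, cyc1, cyc2, cyc3, cyc4, cyc5, cyc6, cyc7, cyc8]
  simp +decide [Finset.sum_range_succ, show Q2.tgt 10 = 4 from rfl, show (![0,1,2,0,3,1,4,2,5,3,4,5] : Fin 12 → Fin 6) 10 = 4 from rfl]
  try abel

lemma D11 (lam : K) : Q2.cycDer K 11 (W2 K lam) = Q2.mkPath K 5 [5,4] - Q2.mkPath K 5 [10,9] := by
  rw [cycDer_eq, W2_eq]
  simp only [MonoidAlgebra.coeff_add, MonoidAlgebra.coeff_sub, MonoidAlgebra.coeff_smul,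
    MonoidAlgebra.coeff_single,
    map_add, map_sub, map_smul, Finsupp.linearCombination_single, one_smul,
    cycDerWord_p, cyc1, cyc2, cyc3, cyc4, cyc5, cyc6, cyc7, cyc8]
  simp +decide [Finset.sum_range_succ, show Q2.tgt 11 = 5 from rfl, show (![0,1,2,0,3,1,4,2,5,3,4,5] : Fin 12 → Fin 6) 11 = 5 from rfl]
  try abel

end JacAux

namespace JacAux

variable {K : Type} [Field K]

lemma wk_0_2_1 : Q2.walk 0 [2, 1] = some 1 := by decide
lemma wk_0_8_5 : Q2.walk 0 [8, 5] = some 1 := by decide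
lemma wk_1_0_2 : Q2.walk 1 [0, 2] = some 2 := by decide
lemma wk_1_4_7 : Q2.walk 1 [4, 7] = some 2 := by decide
lemma wk_2_1_0 : Q2.walk 2 [1, 0] = some 0 := by decide
lemma wk_2_6_3 : Q2.walk 2 [6, 3] = some 0 := by decide
lemma wk_0_8_10 : Q2.walk 0 [8, 10] = some 4 := by decide
lemma wk_0_2_6 : Q2.walk 0 [2, 6] = some 4 := by decide
lemma wk_3_11_5 : Q2.walk 3 [11, 5] = some 1 := by decide
lemma wk_3_7_1 : Q2.walk 3 [7, 1] = some 1 := by decide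
lemma wk_1_4_11 : Q2.walk 1 [4, 11] = some 5 := by decide
lemma wk_1_0_8 : Q2.walk 1 [0, 8] = some 5 := by decide
lemma wk_4_9_7 : Q2.walk 4 [9, 7] = some 2 := by decide
lemma wk_4_3_2 : Q2.walk 4 [3, 2] = some 2 := by decide
lemma wk_2_6_9 : Q2.walk 2 [6, 9] = some 3 := by decide
lemma wk_2_1_4 : Q2.walk 2 [1, 4] = some 3 := by decide
lemma wk_5_10_3 : Q2.walk 5 [10, 3] = some 0 := by decide
lemma wk_5_5_0 : Q2.walk 5 [5, 0] = some 0 := by decide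
lemma wk_3_7_6 : Q2.walk 3 [7, 6] = some 4 := by decide
lemma wk_3_11_10 : Q2.walk 3 [11, 10] = some 4 := by decide
lemma wk_4_3_8 : Q2.walk 4 [3, 8] = some 5 := by decide
lemma wk_4_9_11 : Q2.walk 4 [9, 11] = some 5 := by decide
lemma wk_5_5_4 : Q2.walk 5 [5, 4] = some 3 := by decide
lemma wk_5_10_9 : Q2.walk 5 [10, 9] = some 3 := by decide

end JacAux

namespace JacAux

variable {K : Type} [Field K]

lemma jacMk_der (mu : K) (a : Fin 12) :
    Q2.jacMk K (W2 K mu) (Q2.cycDer K a (W2 K mu)) = 0 := by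
  have := RingQuot.mkAlgHom_rel K (FQuiver.jacRel.der (Q := Q2) (K := K) (W := W2 K mu) a)
  simpa [FQuiver.jacMk] using this

lemma Falg_mkPath (c : Fin 12 → K) (W : MonoidAlgebra K (PM Q2))
    {v w : Fin 6} {l : List (Fin 12)} (h : Q2.walk v l = some w)
    {v' w' : Fin 6} {l' : List (Fin 12)} (hv : tu v = v') (hw : tu w = w')
    (hl : l.map sg = l') (h' : Q2.walk v' l' = some w') :
    Falg c W (Q2.mkPath K v l)
      = (l.map c).prod • Q2.jacMk K W (MonoidAlgebra.single (.p ⟨((v', w'), l'), h'⟩) 1) := by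
  subst hv hw hl
  rw [mkPath_some h, Falg_single, one_smul]
  rfl

/-- The rescaling function for the map `λ`-algebra → `λ⁻¹`-algebra. -/
def ut (lam : K) : Fin 12 → K := ![1, lam⁻¹, 1, 1, 1, 1, 1, lam, 1, lam⁻¹, 1, 1]

@[simp] lemma ut0 (lam : K) : ut lam 0 = 1 := rfl
@[simp] lemma ut1 (lam : K) : ut lam 1 = lam⁻¹ := rfl
@[simp] lemma ut2 (lam : K) : ut lam 2 = 1 := rfl
@[simp] lemma ut3 (lam : K) : ut lam 3 = 1 := rfl
@[simp] lemma ut4 (lam : K) : ut lam 4 = 1 := rfl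
@[simp] lemma ut5 (lam : K) : ut lam 5 = 1 := rfl
@[simp] lemma ut6 (lam : K) : ut lam 6 = 1 := rfl
@[simp] lemma ut7 (lam : K) : ut lam 7 = lam := rfl
@[simp] lemma ut8 (lam : K) : ut lam 8 = 1 := rfl
@[simp] lemma ut9 (lam : K) : ut lam 9 = lam⁻¹ := rfl
@[simp] lemma ut10 (lam : K) : ut lam 10 = 1 := rfl
@[simp] lemma ut11 (lam : K) : ut lam 11 = 1 := rfl

example (lam : K) (h0 : lam ≠ 0) :
    Falg (ut lam) (W2 K lam⁻¹) (Q2.cycDer K 0 (W2 K lam)) = 0 := by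
  have T := jacMk_der (K := K) lam⁻¹ 9
  rw [D9, mkPath_some wk_3_7_6, mkPath_some wk_3_11_10, map_sub, sub_eq_zero] at T
  rw [D0, map_sub, map_smul,
    Falg_mkPath _ _ wk_0_2_1 (v' := 3) (w' := 4) (l' := [11,10]) rfl rfl rfl wk_3_11_10,
    Falg_mkPath _ _ wk_0_8_5 (v' := 3) (w' := 4) (l' := [7,6]) rfl rfl rfl wk_3_7_6,
    sub_eq_zero, ← T]
  show lam • ((ut lam 2 * (ut lam 1 * 1)) • _) = (ut lam 8 * (ut lam 5 * 1)) • _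
  simp [smul_smul, mul_inv_cancel₀ h0]

end JacAux

namespace JacAux

variable {K : Type} [Field K]

/-- The rescaling function for the inverse map. -/
def vt (lam : K) : Fin 12 → K := ![lam, 1, 1, 1, 1, 1, 1, 1, lam⁻¹, 1, lam, 1]

@[simp] lemma vt0 (lam : K) : vt lam 0 = lam := rfl
@[simp] lemma vt1 (lam : K) : vt lam 1 = 1 := rfl
@[simp] lemma vt2 (lam : K) : vt lam 2 = 1 := rfl
@[simp] lemma vt3 (lam : K) : vt lam 3 = 1 := rfl
@[simp] lemma vt4 (lam : K) : vt lam 4 = 1 := rfl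
@[simp] lemma vt5 (lam : K) : vt lam 5 = 1 := rfl
@[simp] lemma vt6 (lam : K) : vt lam 6 = 1 := rfl
@[simp] lemma vt7 (lam : K) : vt lam 7 = 1 := rfl
@[simp] lemma vt8 (lam : K) : vt lam 8 = lam⁻¹ := rfl
@[simp] lemma vt9 (lam : K) : vt lam 9 = 1 := rfl
@[simp] lemma vt10 (lam : K) : vt lam 10 = lam := rfl
@[simp] lemma vt11 (lam : K) : vt lam 11 = 1 := rfl

lemma relF0 (lam : K) (h0 : lam ≠ 0) :
    Falg (ut lam) (W2 K lam⁻¹) (Q2.cycDer K 0 (W2 K lam)) = 0 := by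
  have T := jacMk_der (K := K) lam⁻¹ 9
  rw [D9, mkPath_some wk_3_7_6, mkPath_some wk_3_11_10, map_sub, sub_eq_zero] at T
  rw [D0, map_sub, map_smul,
    Falg_mkPath _ _ wk_0_2_1 (v' := 3) (w' := 4) (l' := [11, 10]) rfl rfl rfl wk_3_11_10,
    Falg_mkPath _ _ wk_0_8_5 (v' := 3) (w' := 4) (l' := [7, 6]) rfl rfl rfl wk_3_7_6,
    sub_eq_zero, ← T]
  simp [smul_smul, mul_inv_cancel₀ h0, inv_mul_cancel₀ h0]

lemma relF1 (lam : K) (h0 : lam ≠ 0) :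
    Falg (ut lam) (W2 K lam⁻¹) (Q2.cycDer K 1 (W2 K lam)) = 0 := by
  have T := jacMk_der (K := K) lam⁻¹ 10
  rw [D10, mkPath_some wk_4_3_8, mkPath_some wk_4_9_11, map_sub, sub_eq_zero] at T
  rw [D1, map_sub, map_smul,
    Falg_mkPath _ _ wk_1_0_2 (v' := 4) (w' := 5) (l' := [9, 11]) rfl rfl rfl wk_4_9_11,
    Falg_mkPath _ _ wk_1_4_7 (v' := 4) (w' := 5) (l' := [3, 8]) rfl rfl rfl wk_4_3_8,
    sub_eq_zero, ← T]
  simp [smul_smul, mul_inv_cancel₀ h0, inv_mul_cancel₀ h0]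

lemma relF2 (lam : K) (h0 : lam ≠ 0) :
    Falg (ut lam) (W2 K lam⁻¹) (Q2.cycDer K 2 (W2 K lam)) = 0 := by
  have T := jacMk_der (K := K) lam⁻¹ 11
  rw [D11, mkPath_some wk_5_5_4, mkPath_some wk_5_10_9, map_sub, sub_eq_zero] at T
  rw [D2, map_sub, map_smul,
    Falg_mkPath _ _ wk_2_1_0 (v' := 5) (w' := 3) (l' := [10, 9]) rfl rfl rfl wk_5_10_9,
    Falg_mkPath _ _ wk_2_6_3 (v' := 5) (w' := 3) (l' := [5, 4]) rfl rfl rfl wk_5_5_4,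
    sub_eq_zero, ← T]
  simp [smul_smul, mul_inv_cancel₀ h0, inv_mul_cancel₀ h0]

lemma relF3 (lam : K) (h0 : lam ≠ 0) :
    Falg (ut lam) (W2 K lam⁻¹) (Q2.cycDer K 3 (W2 K lam)) = 0 := by
  have T := jacMk_der (K := K) lam⁻¹ 4
  rw [D4, mkPath_some wk_3_11_5, mkPath_some wk_3_7_1, map_sub, sub_eq_zero] at T
  rw [D3, map_sub,
    Falg_mkPath _ _ wk_0_8_10 (v' := 3) (w' := 1) (l' := [7, 1]) rfl rfl rfl wk_3_7_1,
    Falg_mkPath _ _ wk_0_2_6 (v' := 3) (w' := 1) (l' := [11, 5]) rfl rfl rfl wk_3_11_5,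
    sub_eq_zero, ← T]
  simp [smul_smul, mul_inv_cancel₀ h0, inv_mul_cancel₀ h0]

lemma relF4 (lam : K) (h0 : lam ≠ 0) :
    Falg (ut lam) (W2 K lam⁻¹) (Q2.cycDer K 4 (W2 K lam)) = 0 := by
  have T := jacMk_der (K := K) lam⁻¹ 3
  rw [D3, mkPath_some wk_0_8_10, mkPath_some wk_0_2_6, map_sub, sub_eq_zero] at T
  rw [D4, map_sub,
    Falg_mkPath _ _ wk_3_11_5 (v' := 0) (w' := 4) (l' := [2, 6]) rfl rfl rfl wk_0_2_6,
    Falg_mkPath _ _ wk_3_7_1 (v' := 0) (w' := 4) (l' := [8, 10]) rfl rfl rfl wk_0_8_10,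
    sub_eq_zero, ← T]
  simp [smul_smul, mul_inv_cancel₀ h0, inv_mul_cancel₀ h0]

lemma relF5 (lam : K) (h0 : lam ≠ 0) :
    Falg (ut lam) (W2 K lam⁻¹) (Q2.cycDer K 5 (W2 K lam)) = 0 := by
  have T := jacMk_der (K := K) lam⁻¹ 6
  rw [D6, mkPath_some wk_4_9_7, mkPath_some wk_4_3_2, map_sub, sub_eq_zero] at T
  rw [D5, map_sub,
    Falg_mkPath _ _ wk_1_4_11 (v' := 4) (w' := 2) (l' := [3, 2]) rfl rfl rfl wk_4_3_2,
    Falg_mkPath _ _ wk_1_0_8 (v' := 4) (w' := 2) (l' := [9, 7]) rfl rfl rfl wk_4_9_7,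
    sub_eq_zero, ← T]
  simp [smul_smul, mul_inv_cancel₀ h0, inv_mul_cancel₀ h0]

lemma relF6 (lam : K) (h0 : lam ≠ 0) :
    Falg (ut lam) (W2 K lam⁻¹) (Q2.cycDer K 6 (W2 K lam)) = 0 := by
  have T := jacMk_der (K := K) lam⁻¹ 5
  rw [D5, mkPath_some wk_1_4_11, mkPath_some wk_1_0_8, map_sub, sub_eq_zero] at T
  rw [D6, map_sub,
    Falg_mkPath _ _ wk_4_9_7 (v' := 1) (w' := 5) (l' := [0, 8]) rfl rfl rfl wk_1_0_8,
    Falg_mkPath _ _ wk_4_3_2 (v' := 1) (w' := 5) (l' := [4, 11]) rfl rfl rfl wk_1_4_11,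
    sub_eq_zero, ← T]
  simp [smul_smul, mul_inv_cancel₀ h0, inv_mul_cancel₀ h0]

lemma relF7 (lam : K) (h0 : lam ≠ 0) :
    Falg (ut lam) (W2 K lam⁻¹) (Q2.cycDer K 7 (W2 K lam)) = 0 := by
  have T := jacMk_der (K := K) lam⁻¹ 8
  rw [D8, mkPath_some wk_5_10_3, mkPath_some wk_5_5_0, map_sub, sub_eq_zero] at T
  rw [D7, map_sub,
    Falg_mkPath _ _ wk_2_6_9 (v' := 5) (w' := 0) (l' := [5, 0]) rfl rfl rfl wk_5_5_0,
    Falg_mkPath _ _ wk_2_1_4 (v' := 5) (w' := 0) (l' := [10, 3]) rfl rfl rfl wk_5_10_3,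
    sub_eq_zero, ← T]
  simp [smul_smul, mul_inv_cancel₀ h0, inv_mul_cancel₀ h0]

lemma relF8 (lam : K) (h0 : lam ≠ 0) :
    Falg (ut lam) (W2 K lam⁻¹) (Q2.cycDer K 8 (W2 K lam)) = 0 := by
  have T := jacMk_der (K := K) lam⁻¹ 7
  rw [D7, mkPath_some wk_2_6_9, mkPath_some wk_2_1_4, map_sub, sub_eq_zero] at T
  rw [D8, map_sub,
    Falg_mkPath _ _ wk_5_10_3 (v' := 2) (w' := 3) (l' := [1, 4]) rfl rfl rfl wk_2_1_4,
    Falg_mkPath _ _ wk_5_5_0 (v' := 2) (w' := 3) (l' := [6, 9]) rfl rfl rfl wk_2_6_9,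
    sub_eq_zero, ← T]
  simp [smul_smul, mul_inv_cancel₀ h0, inv_mul_cancel₀ h0]

lemma relF9 (lam : K) (h0 : lam ≠ 0) :
    Falg (ut lam) (W2 K lam⁻¹) (Q2.cycDer K 9 (W2 K lam)) = 0 := by
  have T := jacMk_der (K := K) lam⁻¹ 0
  rw [D0, mkPath_some wk_0_2_1, mkPath_some wk_0_8_5, map_sub, map_smul, sub_eq_zero] at T
  rw [D9, map_sub,
    Falg_mkPath _ _ wk_3_7_6 (v' := 0) (w' := 1) (l' := [8, 5]) rfl rfl rfl wk_0_8_5,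
    Falg_mkPath _ _ wk_3_11_10 (v' := 0) (w' := 1) (l' := [2, 1]) rfl rfl rfl wk_0_2_1,
    sub_eq_zero, ← T]
  simp [smul_smul, mul_inv_cancel₀ h0, inv_mul_cancel₀ h0]

lemma relF10 (lam : K) (h0 : lam ≠ 0) :
    Falg (ut lam) (W2 K lam⁻¹) (Q2.cycDer K 10 (W2 K lam)) = 0 := by
  have T := jacMk_der (K := K) lam⁻¹ 1
  rw [D1, mkPath_some wk_1_0_2, mkPath_some wk_1_4_7, map_sub, map_smul, sub_eq_zero] at T
  rw [D10, map_sub,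
    Falg_mkPath _ _ wk_4_3_8 (v' := 1) (w' := 2) (l' := [4, 7]) rfl rfl rfl wk_1_4_7,
    Falg_mkPath _ _ wk_4_9_11 (v' := 1) (w' := 2) (l' := [0, 2]) rfl rfl rfl wk_1_0_2,
    sub_eq_zero, ← T]
  simp [smul_smul, mul_inv_cancel₀ h0, inv_mul_cancel₀ h0]

lemma relF11 (lam : K) (h0 : lam ≠ 0) :
    Falg (ut lam) (W2 K lam⁻¹) (Q2.cycDer K 11 (W2 K lam)) = 0 := by
  have T := jacMk_der (K := K) lam⁻¹ 2
  rw [D2, mkPath_some wk_2_1_0, mkPath_some wk_2_6_3, map_sub, map_smul, sub_eq_zero] at T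
  rw [D11, map_sub,
    Falg_mkPath _ _ wk_5_5_4 (v' := 2) (w' := 0) (l' := [6, 3]) rfl rfl rfl wk_2_6_3,
    Falg_mkPath _ _ wk_5_10_9 (v' := 2) (w' := 0) (l' := [1, 0]) rfl rfl rfl wk_2_1_0,
    sub_eq_zero, ← T]
  simp [smul_smul, mul_inv_cancel₀ h0, inv_mul_cancel₀ h0]

lemma relB0 (lam : K) (h0 : lam ≠ 0) :
    Falg (vt lam) (W2 K lam) (Q2.cycDer K 0 (W2 K lam⁻¹)) = 0 := by
  have T := jacMk_der (K := K) lam 9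
  rw [D9, mkPath_some wk_3_7_6, mkPath_some wk_3_11_10, map_sub, sub_eq_zero] at T
  rw [D0, map_sub, map_smul,
    Falg_mkPath _ _ wk_0_2_1 (v' := 3) (w' := 4) (l' := [11, 10]) rfl rfl rfl wk_3_11_10,
    Falg_mkPath _ _ wk_0_8_5 (v' := 3) (w' := 4) (l' := [7, 6]) rfl rfl rfl wk_3_7_6,
    sub_eq_zero, ← T]
  simp [smul_smul, mul_inv_cancel₀ h0, inv_mul_cancel₀ h0]

lemma relB1 (lam : K) (h0 : lam ≠ 0) :
    Falg (vt lam) (W2 K lam) (Q2.cycDer K 1 (W2 K lam⁻¹)) = 0 := by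
  have T := jacMk_der (K := K) lam 10
  rw [D10, mkPath_some wk_4_3_8, mkPath_some wk_4_9_11, map_sub, sub_eq_zero] at T
  rw [D1, map_sub, map_smul,
    Falg_mkPath _ _ wk_1_0_2 (v' := 4) (w' := 5) (l' := [9, 11]) rfl rfl rfl wk_4_9_11,
    Falg_mkPath _ _ wk_1_4_7 (v' := 4) (w' := 5) (l' := [3, 8]) rfl rfl rfl wk_4_3_8,
    sub_eq_zero, ← T]
  simp [smul_smul, mul_inv_cancel₀ h0, inv_mul_cancel₀ h0]

lemma relB2 (lam : K) (h0 : lam ≠ 0) :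
    Falg (vt lam) (W2 K lam) (Q2.cycDer K 2 (W2 K lam⁻¹)) = 0 := by
  have T := jacMk_der (K := K) lam 11
  rw [D11, mkPath_some wk_5_5_4, mkPath_some wk_5_10_9, map_sub, sub_eq_zero] at T
  rw [D2, map_sub, map_smul,
    Falg_mkPath _ _ wk_2_1_0 (v' := 5) (w' := 3) (l' := [10, 9]) rfl rfl rfl wk_5_10_9,
    Falg_mkPath _ _ wk_2_6_3 (v' := 5) (w' := 3) (l' := [5, 4]) rfl rfl rfl wk_5_5_4,
    sub_eq_zero, ← T]
  simp [smul_smul, mul_inv_cancel₀ h0, inv_mul_cancel₀ h0]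

lemma relB3 (lam : K) (h0 : lam ≠ 0) :
    Falg (vt lam) (W2 K lam) (Q2.cycDer K 3 (W2 K lam⁻¹)) = 0 := by
  have T := jacMk_der (K := K) lam 4
  rw [D4, mkPath_some wk_3_11_5, mkPath_some wk_3_7_1, map_sub, sub_eq_zero] at T
  rw [D3, map_sub,
    Falg_mkPath _ _ wk_0_8_10 (v' := 3) (w' := 1) (l' := [7, 1]) rfl rfl rfl wk_3_7_1,
    Falg_mkPath _ _ wk_0_2_6 (v' := 3) (w' := 1) (l' := [11, 5]) rfl rfl rfl wk_3_11_5,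
    sub_eq_zero, ← T]
  simp [smul_smul, mul_inv_cancel₀ h0, inv_mul_cancel₀ h0]

lemma relB4 (lam : K) (h0 : lam ≠ 0) :
    Falg (vt lam) (W2 K lam) (Q2.cycDer K 4 (W2 K lam⁻¹)) = 0 := by
  have T := jacMk_der (K := K) lam 3
  rw [D3, mkPath_some wk_0_8_10, mkPath_some wk_0_2_6, map_sub, sub_eq_zero] at T
  rw [D4, map_sub,
    Falg_mkPath _ _ wk_3_11_5 (v' := 0) (w' := 4) (l' := [2, 6]) rfl rfl rfl wk_0_2_6,
    Falg_mkPath _ _ wk_3_7_1 (v' := 0) (w' := 4) (l' := [8, 10]) rfl rfl rfl wk_0_8_10,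
    sub_eq_zero, ← T]
  simp [smul_smul, mul_inv_cancel₀ h0, inv_mul_cancel₀ h0]

lemma relB5 (lam : K) (h0 : lam ≠ 0) :
    Falg (vt lam) (W2 K lam) (Q2.cycDer K 5 (W2 K lam⁻¹)) = 0 := by
  have T := jacMk_der (K := K) lam 6
  rw [D6, mkPath_some wk_4_9_7, mkPath_some wk_4_3_2, map_sub, sub_eq_zero] at T
  rw [D5, map_sub,
    Falg_mkPath _ _ wk_1_4_11 (v' := 4) (w' := 2) (l' := [3, 2]) rfl rfl rfl wk_4_3_2,
    Falg_mkPath _ _ wk_1_0_8 (v' := 4) (w' := 2) (l' := [9, 7]) rfl rfl rfl wk_4_9_7,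
    sub_eq_zero, ← T]
  simp [smul_smul, mul_inv_cancel₀ h0, inv_mul_cancel₀ h0]

lemma relB6 (lam : K) (h0 : lam ≠ 0) :
    Falg (vt lam) (W2 K lam) (Q2.cycDer K 6 (W2 K lam⁻¹)) = 0 := by
  have T := jacMk_der (K := K) lam 5
  rw [D5, mkPath_some wk_1_4_11, mkPath_some wk_1_0_8, map_sub, sub_eq_zero] at T
  rw [D6, map_sub,
    Falg_mkPath _ _ wk_4_9_7 (v' := 1) (w' := 5) (l' := [0, 8]) rfl rfl rfl wk_1_0_8,
    Falg_mkPath _ _ wk_4_3_2 (v' := 1) (w' := 5) (l' := [4, 11]) rfl rfl rfl wk_1_4_11,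
    sub_eq_zero, ← T]
  simp [smul_smul, mul_inv_cancel₀ h0, inv_mul_cancel₀ h0]

lemma relB7 (lam : K) (h0 : lam ≠ 0) :
    Falg (vt lam) (W2 K lam) (Q2.cycDer K 7 (W2 K lam⁻¹)) = 0 := by
  have T := jacMk_der (K := K) lam 8
  rw [D8, mkPath_some wk_5_10_3, mkPath_some wk_5_5_0, map_sub, sub_eq_zero] at T
  rw [D7, map_sub,
    Falg_mkPath _ _ wk_2_6_9 (v' := 5) (w' := 0) (l' := [5, 0]) rfl rfl rfl wk_5_5_0,
    Falg_mkPath _ _ wk_2_1_4 (v' := 5) (w' := 0) (l' := [10, 3]) rfl rfl rfl wk_5_10_3,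
    sub_eq_zero, ← T]
  simp [smul_smul, mul_inv_cancel₀ h0, inv_mul_cancel₀ h0]

lemma relB8 (lam : K) (h0 : lam ≠ 0) :
    Falg (vt lam) (W2 K lam) (Q2.cycDer K 8 (W2 K lam⁻¹)) = 0 := by
  have T := jacMk_der (K := K) lam 7
  rw [D7, mkPath_some wk_2_6_9, mkPath_some wk_2_1_4, map_sub, sub_eq_zero] at T
  rw [D8, map_sub,
    Falg_mkPath _ _ wk_5_10_3 (v' := 2) (w' := 3) (l' := [1, 4]) rfl rfl rfl wk_2_1_4,
    Falg_mkPath _ _ wk_5_5_0 (v' := 2) (w' := 3) (l' := [6, 9]) rfl rfl rfl wk_2_6_9,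
    sub_eq_zero, ← T]
  simp [smul_smul, mul_inv_cancel₀ h0, inv_mul_cancel₀ h0]

lemma relB9 (lam : K) (h0 : lam ≠ 0) :
    Falg (vt lam) (W2 K lam) (Q2.cycDer K 9 (W2 K lam⁻¹)) = 0 := by
  have T := jacMk_der (K := K) lam 0
  rw [D0, mkPath_some wk_0_2_1, mkPath_some wk_0_8_5, map_sub, map_smul, sub_eq_zero] at T
  rw [D9, map_sub,
    Falg_mkPath _ _ wk_3_7_6 (v' := 0) (w' := 1) (l' := [8, 5]) rfl rfl rfl wk_0_8_5,
    Falg_mkPath _ _ wk_3_11_10 (v' := 0) (w' := 1) (l' := [2, 1]) rfl rfl rfl wk_0_2_1,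
    sub_eq_zero, ← T]
  simp [smul_smul, mul_inv_cancel₀ h0, inv_mul_cancel₀ h0]

lemma relB10 (lam : K) (h0 : lam ≠ 0) :
    Falg (vt lam) (W2 K lam) (Q2.cycDer K 10 (W2 K lam⁻¹)) = 0 := by
  have T := jacMk_der (K := K) lam 1
  rw [D1, mkPath_some wk_1_0_2, mkPath_some wk_1_4_7, map_sub, map_smul, sub_eq_zero] at T
  rw [D10, map_sub,
    Falg_mkPath _ _ wk_4_3_8 (v' := 1) (w' := 2) (l' := [4, 7]) rfl rfl rfl wk_1_4_7,
    Falg_mkPath _ _ wk_4_9_11 (v' := 1) (w' := 2) (l' := [0, 2]) rfl rfl rfl wk_1_0_2,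
    sub_eq_zero, ← T]
  simp [smul_smul, mul_inv_cancel₀ h0, inv_mul_cancel₀ h0]

lemma relB11 (lam : K) (h0 : lam ≠ 0) :
    Falg (vt lam) (W2 K lam) (Q2.cycDer K 11 (W2 K lam⁻¹)) = 0 := by
  have T := jacMk_der (K := K) lam 2
  rw [D2, mkPath_some wk_2_1_0, mkPath_some wk_2_6_3, map_sub, map_smul, sub_eq_zero] at T
  rw [D11, map_sub,
    Falg_mkPath _ _ wk_5_5_4 (v' := 2) (w' := 0) (l' := [6, 3]) rfl rfl rfl wk_2_6_3,
    Falg_mkPath _ _ wk_5_10_9 (v' := 2) (w' := 0) (l' := [1, 0]) rfl rfl rfl wk_2_1_0,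
    sub_eq_zero, ← T]
  simp [smul_smul, mul_inv_cancel₀ h0, inv_mul_cancel₀ h0]

end JacAux

namespace JacAux

variable {K : Type} [Field K]

lemma jacMk_one' (W : MonoidAlgebra K (PM Q2)) :
    Q2.jacMk K W (MonoidAlgebra.single .one 1) = 1 := by
  rw [show (.one : PM Q2) = 1 from rfl, ← MonoidAlgebra.one_def, map_one]

lemma tu_bij : Function.Bijective tu := by decide

lemma Falg_one_rel (c : Fin 12 → K) (W : MonoidAlgebra K (PM Q2)) :
    Falg c W (MonoidAlgebra.single .one 1)
      = Falg c W (∑ v : Fin 6, MonoidAlgebra.single (.p (Q2.idPath v)) 1) := by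
  rw [map_sum, Falg_single]
  simp only [Falg_single, one_smul]
  have hv : ∀ v : Fin 6, FmonFun c W (.p (Q2.idPath v))
      = Q2.jacMk K W (MonoidAlgebra.single (.p (Q2.idPath (tu v))) 1) := by
    intro v
    show (1 : K) • _ = _
    rw [one_smul]
    rfl
  rw [Finset.sum_congr rfl fun v _ => hv v]
  have hre : ∑ v : Fin 6, Q2.jacMk K W (MonoidAlgebra.single (.p (Q2.idPath (tu v))) 1)
      = ∑ v : Fin 6, Q2.jacMk K W (MonoidAlgebra.single (.p (Q2.idPath v)) 1) :=
    Fintype.sum_bijective tu tu_bij _ _ (fun v => rfl)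
  rw [hre, ← map_sum]
  have hone := RingQuot.mkAlgHom_rel K (FQuiver.jacRel.one (Q := Q2) (K := K) (W := W))
  show FmonFun c W .one = _
  rw [show FmonFun c W .one = 1 from rfl, ← jacMk_one' W, FQuiver.jacMk, hone]

lemma relF (lam : K) (h0 : lam ≠ 0) :
    ∀ ⦃x y : MonoidAlgebra K (PM Q2)⦄, Q2.jacRel K (W2 K lam) x y →
      Falg (ut lam) (W2 K lam⁻¹) x = Falg (ut lam) (W2 K lam⁻¹) y := by
  intro x y h
  cases h with
  | zero => rw [map_zero, Falg_single, one_smul]; rfl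
  | one => exact Falg_one_rel _ _
  | der a =>
    rw [map_zero]
    fin_cases a
    · exact relF0 lam h0
    · exact relF1 lam h0
    · exact relF2 lam h0
    · exact relF3 lam h0
    · exact relF4 lam h0
    · exact relF5 lam h0
    · exact relF6 lam h0
    · exact relF7 lam h0
    · exact relF8 lam h0
    · exact relF9 lam h0
    · exact relF10 lam h0
    · exact relF11 lam h0

lemma relB (lam : K) (h0 : lam ≠ 0) :
    ∀ ⦃x y : MonoidAlgebra K (PM Q2)⦄, Q2.jacRel K (W2 K lam⁻¹) x y →
      Falg (vt lam) (W2 K lam) x = Falg (vt lam) (W2 K lam) y := by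
  intro x y h
  cases h with
  | zero => rw [map_zero, Falg_single, one_smul]; rfl
  | one => exact Falg_one_rel _ _
  | der a =>
    rw [map_zero]
    fin_cases a
    · exact relB0 lam h0
    · exact relB1 lam h0
    · exact relB2 lam h0
    · exact relB3 lam h0
    · exact relB4 lam h0
    · exact relB5 lam h0
    · exact relB6 lam h0
    · exact relB7 lam h0
    · exact relB8 lam h0
    · exact relB9 lam h0
    · exact relB10 lam h0
    · exact relB11 lam h0

/-- Forward algebra hom. -/
noncomputable def phiF (lam : K) (h0 : lam ≠ 0) :
    Q2.JacAlg K (W2 K lam) →ₐ[K] Q2.JacAlg K (W2 K lam⁻¹) :=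
  RingQuot.liftAlgHom K ⟨Falg (ut lam) (W2 K lam⁻¹), relF lam h0⟩

/-- Backward algebra hom. -/
noncomputable def phiB (lam : K) (h0 : lam ≠ 0) :
    Q2.JacAlg K (W2 K lam⁻¹) →ₐ[K] Q2.JacAlg K (W2 K lam) :=
  RingQuot.liftAlgHom K ⟨Falg (vt lam) (W2 K lam), relB lam h0⟩

lemma phiF_mk (lam : K) (h0 : lam ≠ 0) (x : MonoidAlgebra K (PM Q2)) :
    phiF lam h0 (Q2.jacMk K (W2 K lam) x) = Falg (ut lam) (W2 K lam⁻¹) x := by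
  rw [FQuiver.jacMk, phiF, RingQuot.liftAlgHom_mkAlgHom_apply]

lemma phiB_mk (lam : K) (h0 : lam ≠ 0) (x : MonoidAlgebra K (PM Q2)) :
    phiB lam h0 (Q2.jacMk K (W2 K lam⁻¹) x) = Falg (vt lam) (W2 K lam) x := by
  rw [FQuiver.jacMk, phiB, RingQuot.liftAlgHom_mkAlgHom_apply]

lemma ut_vt (lam : K) (h0 : lam ≠ 0) : ∀ e, ut lam e * vt lam (sg e) = 1 := by
  intro e
  fin_cases e <;>
    first
      | exact one_mul 1
      | exact inv_mul_cancel₀ h0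
      | exact mul_inv_cancel₀ h0

lemma vt_ut (lam : K) (h0 : lam ≠ 0) : ∀ e, vt lam e * ut lam (sg e) = 1 := by
  intro e
  fin_cases e <;>
    first
      | exact one_mul 1
      | exact inv_mul_cancel₀ h0
      | exact mul_inv_cancel₀ h0

lemma prod_cancel (c c' : Fin 12 → K) (hc : ∀ e, c e * c' (sg e) = 1)
    (l : List (Fin 12)) : (l.map c).prod * ((l.map sg).map c').prod = 1 := by
  induction l with
  | nil => simp
  | cons e l ih =>
    simp only [List.map_cons, List.prod_cons]
    calc c e * (l.map c).prod * (c' (sg e) * ((l.map sg).map c').prod)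
        = (c e * c' (sg e)) * ((l.map c).prod * ((l.map sg).map c').prod) := by ring
      _ = 1 := by rw [hc, ih, one_mul]

end JacAux

namespace JacAux

variable {K : Type} [Field K]

lemma key_BF (lam : K) (h0 : lam ≠ 0) :
    ((phiB lam h0).comp (phiF lam h0)).comp (Q2.jacMk K (W2 K lam))
      = Q2.jacMk K (W2 K lam) := by
  refine MonoidAlgebra.algHom_ext ?_ (Subsingleton.elim _ _)
  intro m
  simp only [AlgHom.comp_apply]
  rw [phiF_mk, Falg_single, one_smul]
  cases m with
  | zero =>
    show phiB lam h0 0 = _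
    rw [map_zero, jacMk_zero']
  | one =>
    show phiB lam h0 1 = _
    rw [map_one, jacMk_one']
  | p x =>
    show phiB lam h0 ((x.1.2.map (ut lam)).prod •
        Q2.jacMk K (W2 K lam⁻¹) (MonoidAlgebra.single (.p (mapPath x)) 1)) = _
    rw [map_smul, phiB_mk, Falg_single, one_smul]
    show (x.1.2.map (ut lam)).prod • (((x.1.2.map sg).map (vt lam)).prod •
        Q2.jacMk K (W2 K lam) (MonoidAlgebra.single (.p (mapPath (mapPath x))) 1)) = _
    rw [mapPath_mapPath, smul_smul, prod_cancel _ _ (ut_vt lam h0), one_smul]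

lemma key_FB (lam : K) (h0 : lam ≠ 0) :
    ((phiF lam h0).comp (phiB lam h0)).comp (Q2.jacMk K (W2 K lam⁻¹))
      = Q2.jacMk K (W2 K lam⁻¹) := by
  refine MonoidAlgebra.algHom_ext ?_ (Subsingleton.elim _ _)
  intro m
  simp only [AlgHom.comp_apply]
  rw [phiB_mk, Falg_single, one_smul]
  cases m with
  | zero =>
    show phiF lam h0 0 = _
    rw [map_zero, jacMk_zero']
  | one =>
    show phiF lam h0 1 = _
    rw [map_one, jacMk_one']
  | p x =>
    show phiF lam h0 ((x.1.2.map (vt lam)).prod •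
        Q2.jacMk K (W2 K lam) (MonoidAlgebra.single (.p (mapPath x)) 1)) = _
    rw [map_smul, phiF_mk, Falg_single, one_smul]
    show (x.1.2.map (vt lam)).prod • (((x.1.2.map sg).map (ut lam)).prod •
        Q2.jacMk K (W2 K lam⁻¹) (MonoidAlgebra.single (.p (mapPath (mapPath x))) 1)) = _
    rw [mapPath_mapPath, smul_smul, prod_cancel _ _ (vt_ut lam h0), one_smul]

end JacAux

/-- There is a `K`-algebra isomorphism
`KQ⁽²⁾/J′(W⁽²⁾_λ) ≅ KQ⁽²⁾/J′(W⁽²⁾_{λ⁻¹})`. -/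
theorem jacAlg2_iso_inv_param (K : Type) [Field K] (lam : K)
    (h0 : lam ≠ 0) (h1 : lam ≠ 1) :
    Nonempty (Q2.JacAlg K (W2 K lam) ≃ₐ[K] Q2.JacAlg K (W2 K lam⁻¹)) := by
  refine ⟨AlgEquiv.ofAlgHom (JacAux.phiF lam h0) (JacAux.phiB lam h0) ?_ ?_⟩
  · apply AlgHom.ext
    intro z
    obtain ⟨x, rfl⟩ := RingQuot.mkAlgHom_surjective K (Q2.jacRel K (W2 K lam⁻¹)) z
    exact DFunLike.congr_fun (JacAux.key_FB lam h0) x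
  · apply AlgHom.ext
    intro z
    obtain ⟨x, rfl⟩ := RingQuot.mkAlgHom_surjective K (Q2.jacRel K (W2 K lam)) z
    exact DFunLike.congr_fun (JacAux.key_BF lam h0) x
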